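/- (Misspecified regression example: marginal δ-SMI posterior for the intercept.) Let n, m ≥ 1, σ_y, σ_z > 0, δ ≥ 0, covariates X₁,…,X_n ∈ ℝ, responses Y₁,…,Y_n ∈ ℝ and data Z₁,…,Z_m ∈ ℝ. Write x̄ := n^{−1}Σᵢ Xᵢ, x̄² := n^{−1}Σᵢ Xᵢ², x̄y := n^{−1}Σᵢ XᵢYᵢ, ȳ := n^{−1}Σᵢ Yᵢ, z̄ := m^{−1}Σ_j Z_j, and assume x̄² > 0. Set ρ := ((σ_y² + δ²)/σ_z²)·(m/n), μ̃_φ := (ρ z̄ + ȳ − x̄·x̄y/x̄²)/(ρ + 1 − (x̄)²/x̄²) and σ̃_φ² := (ρσ_z²/m)/(ρ + 1 − (x̄)²/x̄²). Then there exists a constant c > 0 (not depending on φ) such that for every φ ∈ ℝ: [∏_{j=1}^{m} gaussianPDF(φ, σ_z², Z_j)] · ∫_ℝ ∏_{i=1}^{n} gaussianPDF(φ + θ̃Xᵢ, σ_y² + δ², Yᵢ) dθ̃ = c · gaussianPDF(μ̃_φ, σ̃_φ², φ). -/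

import Mathlib

open MeasureTheory Real

/-- The density at `x` of the normal distribution with mean `m` and variance `v`. -/
noncomputable def gaussianPDF (m v x : ℝ) : ℝ :=
  (Real.sqrt (2 * Real.pi * v))⁻¹ * Real.exp (-((x - m) ^ 2) / (2 * v))

private lemma gauss_int (k μ c0 : ℝ) (hk : 0 < k) :
    ∫ θ : ℝ, Real.exp (-(k * (θ - μ)^2) + c0)
      = Real.sqrt (π / k) * Real.exp c0 := by
  have h1 : ∀ θ : ℝ, Real.exp (-(k * (θ - μ)^2) + c0)
      = Real.exp (-k * (θ - μ)^2) * Real.exp c0 := by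
    intro θ; rw [← Real.exp_add]; ring_nf
  simp_rw [h1]
  rw [MeasureTheory.integral_mul_const]
  congr 1
  rw [MeasureTheory.integral_sub_right_eq_self (μ := volume) (fun θ : ℝ => Real.exp (-k * θ^2)) μ]
  exact integral_gaussian k

private lemma gauss_prod {k : ℕ} (v : ℝ) (mf xf : Fin k → ℝ) :
    ∏ j, gaussianPDF (mf j) v (xf j)
      = (Real.sqrt (2 * π * v))⁻¹ ^ k *
        Real.exp (-(∑ j, (xf j - mf j) ^ 2) / (2 * v)) := by
  unfold gaussianPDF
  rw [Finset.prod_mul_distrib, Finset.prod_const, ← Real.exp_sum]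
  congr 1
  · simp
  · rw [← Finset.sum_div, ← Finset.sum_neg_distrib]

private lemma sum_sq_lin {k : ℕ} (X Y : Fin k → ℝ) (φ θ : ℝ) :
    ∑ i, (Y i - (φ + θ * X i))^2
      = (∑ i, (X i)^2) * θ^2 - 2*((∑ i, X i * Y i) - φ * (∑ i, X i)) * θ
        + ((k:ℝ) * φ^2 - 2*(∑ i, Y i)*φ + ∑ i, (Y i)^2) := by
  have h : ∀ i, (Y i - (φ + θ * X i))^2
      = (X i)^2 * θ^2 - 2*((X i * Y i) - φ * (X i)) * θ
        + (φ^2 - 2*(Y i)*φ + (Y i)^2) := by intro i; ring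
  rw [Finset.sum_congr rfl (fun i _ => h i)]
  simp only [Finset.sum_add_distrib, Finset.sum_sub_distrib, ← Finset.sum_mul,
    ← Finset.mul_sum, Finset.sum_const, Finset.card_univ, Fintype.card_fin, nsmul_eq_mul]

private lemma sum_sq_const {k : ℕ} (Z : Fin k → ℝ) (φ : ℝ) :
    ∑ j, (Z j - φ)^2 = (k:ℝ) * φ^2 - 2*(∑ j, Z j)*φ + ∑ j, (Z j)^2 := by
  have := sum_sq_lin (fun _ : Fin k => (0:ℝ)) Z φ 0
  simpa using this

set_option maxHeartbeats 1000000 in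
private lemma exponent_identity (N M w ρ xbar x2bar xybar ybar zbar SY2 SZ2 E μ s φ : ℝ)
    (hN : N ≠ 0) (hM : M ≠ 0) (hw : w ≠ 0) (hρ : ρ ≠ 0) (hx2 : x2bar ≠ 0)
    (hE0 : E ≠ 0)
    (hE : E = ρ * x2bar + x2bar - xbar^2)
    (hμ : μ = (ρ*zbar*x2bar + ybar*x2bar - xbar*xybar)/E)
    (hs : s = ρ*w*x2bar/(M*E)) :
    -(M*φ^2 - 2*(M*zbar)*φ + SZ2)/(2*w)
      + (((N*xybar) - φ*(N*xbar))^2/(N*x2bar)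
          - (N*φ^2 - 2*(N*ybar)*φ + SY2))/(2*(ρ*w*N/M))
    = ((((N*xybar) - 0*(N*xbar))^2/(N*x2bar)
          - (N*0^2 - 2*(N*ybar)*0 + SY2))/(2*(ρ*w*N/M)) - SZ2/(2*w) + μ^2/(2*s))
      + (-((φ-μ)^2)/(2*s)) := by
  subst hμ hs
  field_simp
  subst hE
  ring

set_option maxHeartbeats 1000000 in
theorem regression_marginal_delta_smi_posterior_intercept
    (n m : ℕ) (hn : 1 ≤ n) (hm : 1 ≤ m)
    (σy σz δ : ℝ) (hσy : 0 < σy) (hσz : 0 < σz) (hδ : 0 ≤ δ)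
    (X Y : Fin n → ℝ) (Z : Fin m → ℝ)
    (xbar : ℝ) (hxbar : xbar = (n : ℝ)⁻¹ * ∑ i, X i)
    (x2bar : ℝ) (hx2bar : x2bar = (n : ℝ)⁻¹ * ∑ i, (X i) ^ 2)
    (xybar : ℝ) (hxybar : xybar = (n : ℝ)⁻¹ * ∑ i, X i * Y i)
    (ybar : ℝ) (hybar : ybar = (n : ℝ)⁻¹ * ∑ i, Y i)
    (zbar : ℝ) (hzbar : zbar = (m : ℝ)⁻¹ * ∑ j, Z j)
    (hx2pos : 0 < x2bar)
    (ρ : ℝ) (hρ : ρ = ((σy ^ 2 + δ ^ 2) / σz ^ 2) * ((m : ℝ) / (n : ℝ)))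
    (μφ : ℝ) (hμφ : μφ = (ρ * zbar + ybar - xbar * xybar / x2bar)
      / (ρ + 1 - xbar ^ 2 / x2bar))
    (σφsq : ℝ) (hσφsq : σφsq = (ρ * σz ^ 2 / (m : ℝ))
      / (ρ + 1 - xbar ^ 2 / x2bar)) :
    ∃ c : ℝ, 0 < c ∧ ∀ φ : ℝ,
      (∏ j, gaussianPDF φ (σz ^ 2) (Z j)) *
        (∫ θt : ℝ, ∏ i, gaussianPDF (φ + θt * X i) (σy ^ 2 + δ ^ 2) (Y i))
        = c * gaussianPDF μφ σφsq φ := by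
  have hn0 : 0 < n := hn
  have hm0 : 0 < m := hm
  have hN : (0:ℝ) < n := by exact_mod_cast hn0
  have hM : (0:ℝ) < m := by exact_mod_cast hm0
  have hN' : (n:ℝ) ≠ 0 := ne_of_gt hN
  have hM' : (m:ℝ) ≠ 0 := ne_of_gt hM
  have hv : (0:ℝ) < σy^2 + δ^2 := by positivity
  have hw : (0:ℝ) < σz^2 := by positivity
  have hρpos : 0 < ρ := by
    rw [hρ]; exact mul_pos (div_pos hv hw) (div_pos hM hN)
  have hSX : ∑ i, X i = (n:ℝ) * xbar := by rw [hxbar]; field_simp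
  have hSX2 : ∑ i, (X i)^2 = (n:ℝ) * x2bar := by rw [hx2bar]; field_simp
  have hSXY : ∑ i, X i * Y i = (n:ℝ) * xybar := by rw [hxybar]; field_simp
  have hSY : ∑ i, Y i = (n:ℝ) * ybar := by rw [hybar]; field_simp
  have hSZ : ∑ j, Z j = (m:ℝ) * zbar := by rw [hzbar]; field_simp
  -- Cauchy-Schwarz : xbar^2 ≤ x2bar
  have hCS : xbar^2 ≤ x2bar := by
    have key : (∑ i, X i)^2 ≤ (n:ℝ) * ∑ i, (X i)^2 := by
      have h := Finset.sum_mul_sq_le_sq_mul_sq Finset.univ X (fun _ => (1:ℝ))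
      simpa [mul_comm] using h
    rw [hxbar, hx2bar]
    have h2 : ((n:ℝ)⁻¹)^2 * ((∑ i, X i)^2) ≤ ((n:ℝ)⁻¹)^2 * ((n:ℝ) * ∑ i, (X i)^2) :=
      mul_le_mul_of_nonneg_left key (by positivity)
    calc ((n:ℝ)⁻¹ * ∑ i, X i)^2 = ((n:ℝ)⁻¹)^2 * (∑ i, X i)^2 := by ring
      _ ≤ ((n:ℝ)⁻¹)^2 * ((n:ℝ) * ∑ i, (X i)^2) := h2
      _ = (n:ℝ)⁻¹ * ∑ i, (X i)^2 := by field_simp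
  set E := ρ * x2bar + x2bar - xbar^2 with hEdef
  have hEpos : 0 < E := by nlinarith [mul_pos hρpos hx2pos]
  have hE' : E ≠ 0 := ne_of_gt hEpos
  have hDpos : 0 < ρ + 1 - xbar^2/x2bar := by
    have h1 : xbar^2 / x2bar ≤ 1 := (div_le_one hx2pos).mpr hCS
    linarith
  have hμ' : μφ = (ρ*zbar*x2bar + ybar*x2bar - xbar*xybar)/E := by
    rw [hμφ, hEdef, div_eq_div_iff (ne_of_gt hDpos) hE']
    field_simp
    ring
  have hs' : σφsq = ρ*σz^2*x2bar/((m:ℝ)*E) := by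
    rw [hσφsq, hEdef, div_eq_div_iff (ne_of_gt hDpos) (by positivity)]
    field_simp
  have hσpos : 0 < σφsq := by
    rw [hs']
    exact div_pos (mul_pos (mul_pos hρpos hw) hx2pos) (mul_pos hM hEpos)
  have hveq : σy^2 + δ^2 = ρ * σz^2 * (n:ℝ) / (m:ℝ) := by
    rw [hρ]; field_simp
  set SY2 := ∑ i, (Y i)^2 with hSY2def
  set SZ2 := ∑ j, (Z j)^2 with hSZ2def
  set kk := ((n:ℝ)*x2bar)/(2*(σy^2+δ^2)) with hkkdef
  have hkk : 0 < kk := div_pos (mul_pos hN hx2pos) (by positivity)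
  set PP : ℝ → ℝ := fun φ =>
    (((n:ℝ)*xybar - φ*((n:ℝ)*xbar))^2/((n:ℝ)*x2bar)
      - ((n:ℝ)*φ^2 - 2*((n:ℝ)*ybar)*φ + SY2))/(2*(σy^2+δ^2)) with hPPdef
  set mm : ℝ → ℝ := fun φ => ((n:ℝ)*xybar - φ*((n:ℝ)*xbar))/((n:ℝ)*x2bar) with hmmdef
  -- the integral over θ
  have hint : ∀ φ : ℝ, (∫ θt : ℝ, ∏ i, gaussianPDF (φ + θt * X i) (σy^2+δ^2) (Y i))
      = (Real.sqrt (2*π*(σy^2+δ^2)))⁻¹^n * (Real.sqrt (π/kk) * Real.exp (PP φ)) := by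
    intro φ
    have h1 : ∀ θ : ℝ, (∏ i, gaussianPDF (φ + θ * X i) (σy^2+δ^2) (Y i))
        = (Real.sqrt (2*π*(σy^2+δ^2)))⁻¹^n * Real.exp (-(kk*(θ - mm φ)^2) + PP φ) := by
      intro θ
      rw [gauss_prod (σy^2+δ^2) (fun i => φ + θ * X i) Y]
      congr 1
      rw [sum_sq_lin X Y φ θ, hSX, hSX2, hSXY, hSY, hPPdef, hmmdef, hkkdef]
      have hx2n : (n:ℝ)*x2bar ≠ 0 := by positivity
      have hvn : (2:ℝ)*(σy^2+δ^2) ≠ 0 := by positivity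
      have hx2 : x2bar ≠ 0 := ne_of_gt hx2pos
      congr 1
      field_simp
      ring
    simp_rw [h1]
    rw [MeasureTheory.integral_const_mul, gauss_int kk (mm φ) (PP φ) hkk]
  -- the Z product
  have hZprod : ∀ φ : ℝ, (∏ j, gaussianPDF φ (σz^2) (Z j))
      = (Real.sqrt (2*π*σz^2))⁻¹^m *
        Real.exp (-((m:ℝ)*φ^2 - 2*((m:ℝ)*zbar)*φ + SZ2)/(2*σz^2)) := by
    intro φ
    rw [gauss_prod (σz^2) (fun _ => φ) Z]
    congr 2
    rw [sum_sq_const Z φ, hSZ]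
  -- exponent identity
  have hexp : ∀ φ : ℝ,
      -((m:ℝ)*φ^2 - 2*((m:ℝ)*zbar)*φ + SZ2)/(2*σz^2) + PP φ
        = (PP 0 - SZ2/(2*σz^2) + μφ^2/(2*σφsq)) + (-((φ-μφ)^2)/(2*σφsq)) := by
    intro φ
    have key := exponent_identity (n:ℝ) (m:ℝ) (σz^2) ρ xbar x2bar xybar ybar zbar
      SY2 SZ2 E μφ σφsq φ hN' hM' (ne_of_gt hw) (ne_of_gt hρpos) (ne_of_gt hx2pos)
      hE' hEdef hμ' hs'
    rw [hPPdef]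
    simp only []
    rw [hveq]
    exact key
  -- constants
  set CZ := (Real.sqrt (2*π*σz^2))⁻¹^m with hCZdef
  set CY := (Real.sqrt (2*π*(σy^2+δ^2)))⁻¹^n with hCYdef
  set G := Real.sqrt (π/kk) with hGdef
  set S := Real.sqrt (2*π*σφsq) with hSdef
  have hCZpos : 0 < CZ := pow_pos (inv_pos.mpr (Real.sqrt_pos.mpr (by positivity))) m
  have hCYpos : 0 < CY := pow_pos (inv_pos.mpr (Real.sqrt_pos.mpr (by positivity))) n
  have hGpos : 0 < G := Real.sqrt_pos.mpr (div_pos Real.pi_pos hkk)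
  have hSpos : 0 < S := Real.sqrt_pos.mpr (by positivity)
  refine ⟨CZ * CY * G * S * Real.exp (PP 0 - SZ2/(2*σz^2) + μφ^2/(2*σφsq)),
    by positivity, ?_⟩
  intro φ
  rw [hZprod φ, hint φ]
  show _ = _ * gaussianPDF μφ σφsq φ
  rw [gaussianPDF]
  have hSne : S ≠ 0 := ne_of_gt hSpos
  calc CZ * Real.exp (-((m:ℝ)*φ^2 - 2*((m:ℝ)*zbar)*φ + SZ2)/(2*σz^2)) *
        (CY * (G * Real.exp (PP φ)))
      = (CZ * CY * G) *
        Real.exp (-((m:ℝ)*φ^2 - 2*((m:ℝ)*zbar)*φ + SZ2)/(2*σz^2) + PP φ) := by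
        rw [Real.exp_add]; ring
    _ = (CZ * CY * G) *
        Real.exp ((PP 0 - SZ2/(2*σz^2) + μφ^2/(2*σφsq)) + (-((φ-μφ)^2)/(2*σφsq))) := by
        rw [hexp φ]
    _ = (CZ * CY * G * S * Real.exp (PP 0 - SZ2/(2*σz^2) + μφ^2/(2*σφsq))) *
        ((Real.sqrt (2 * π * σφsq))⁻¹ * Real.exp (-((φ - μφ)^2)/(2*σφsq))) := by
        rw [Real.exp_add, ← hSdef]
        field_simp
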